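/- Given m ≥ 3 distinct odd natural numbers o_1, …, o_m and m distinct even natural numbers e_1, …, e_m, there exists a permutation π of {1, …, m} such that |e_k - o_{π(k)}| > 1 for every k, i.e., no paired even and odd number are adjacent integers. -/

import Mathlib

theorem delta_pairing (m : ℕ) (hm : 3 ≤ m)
    (o e : Fin m → ℕ) (ho : Function.Injective o) (he : Function.Injective e)
    (hodd : ∀ k, Odd (o k)) (heven : ∀ k, Even (e k)) :
    ∃ π : Equiv.Perm (Fin m), ∀ k : Fin m, 1 < |(e k : ℤ) - (o (π k) : ℤ)| := by
  classical
  set bad : Fin m → Fin m → Prop :=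
    fun k j => (o j : ℤ) = (e k : ℤ) - 1 ∨ (o j : ℤ) = (e k : ℤ) + 1 with hbad
  set t : Fin m → Finset (Fin m) :=
    fun k => Finset.univ.filter (fun j => ¬ bad k j) with ht
  have hmem : ∀ k j, j ∈ t k ↔ ¬ bad k j := by
    intro k j; simp [ht]
  -- for each k, at most 2 bad odds
  have hbadk : ∀ k : Fin m,
      (Finset.univ.filter (fun j => bad k j)).card ≤ 2 := by
    intro k
    have h1 : (Finset.univ.filter (fun j => bad k j)).card
        ≤ ({(e k : ℤ) - 1, (e k : ℤ) + 1} : Finset ℤ).card := by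
      apply Finset.card_le_card_of_injOn (fun j => (o j : ℤ))
      · intro j hj
        simp only [Finset.mem_coe, Finset.mem_filter, hbad] at hj
        simp only [Finset.mem_coe, Finset.mem_insert, Finset.mem_singleton]
        tauto
      · intro a _ b _ hab
        exact ho (by simpa using hab)
    have h2 : ({(e k : ℤ) - 1, (e k : ℤ) + 1} : Finset ℤ).card ≤ 2 :=
      (Finset.card_insert_le _ _).trans (by simp)
    omega
  -- for each j, at most 2 bad evens
  have hbadj : ∀ j : Fin m,
      (Finset.univ.filter (fun k => bad k j)).card ≤ 2 := by
    intro j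
    have h1 : (Finset.univ.filter (fun k => bad k j)).card
        ≤ ({(o j : ℤ) + 1, (o j : ℤ) - 1} : Finset ℤ).card := by
      apply Finset.card_le_card_of_injOn (fun k => (e k : ℤ))
      · intro k hk
        simp only [Finset.mem_coe, Finset.mem_filter, hbad] at hk
        simp only [Finset.mem_coe, Finset.mem_insert, Finset.mem_singleton]
        rcases hk.2 with h | h
        · left; omega
        · right; omega
      · intro a _ b _ hab
        exact he (by simpa using hab)
    have h2 : ({(o j : ℤ) + 1, (o j : ℤ) - 1} : Finset ℤ).card ≤ 2 :=
      (Finset.card_insert_le _ _).trans (by simp)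
    omega
  have htcard : ∀ k, m - 2 ≤ (t k).card := by
    intro k
    have := Finset.card_filter_add_card_filter_not
      (s := (Finset.univ : Finset (Fin m))) (p := fun j => bad k j)
    have hb := hbadk k
    have hu : (Finset.univ : Finset (Fin m)).card = m := by simp
    have : (t k).card = (Finset.univ.filter (fun j => ¬ bad k j)).card := by rw [ht]
    omega
  have hall : ∀ s : Finset (Fin m), s.card ≤ (s.biUnion t).card := by
    intro s
    rcases Nat.lt_or_ge s.card 2 with h2 | h2
    · rcases Finset.eq_empty_or_nonempty s with rfl | ⟨k, hk⟩
      · simp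
      · have hsub : t k ⊆ s.biUnion t := Finset.subset_biUnion_of_mem t hk
        have hle := Finset.card_le_card hsub
        have := htcard k
        omega
    rcases Nat.lt_or_ge s.card 3 with h3 | h3
    · -- s.card = 2
      have hcard2 : s.card = 2 := by omega
      obtain ⟨k1, k2, hk12, rfl⟩ := Finset.card_eq_two.mp hcard2
      have hek : (e k1 : ℤ) ≠ (e k2 : ℤ) := by
        intro h; exact hk12 (he (by exact_mod_cast h))
      -- the set of j bad for both k1 and k2 is a subsingleton
      have hsub : ∀ j, j ∉ ({k1, k2} : Finset (Fin m)).biUnion t →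
          bad k1 j ∧ bad k2 j := by
        intro j hj
        simp only [Finset.mem_biUnion, Finset.mem_insert, Finset.mem_singleton,
          not_exists] at hj
        constructor
        · have := hj k1; simp [hmem] at this; tauto
        · have := hj k2; simp [hmem] at this; tauto
      have hco : (((({k1, k2} : Finset (Fin m)).biUnion t)ᶜ)).card ≤ 1 := by
        apply Finset.card_le_one.mpr
        intro a ha b hb
        rw [Finset.mem_compl] at ha hb
        obtain ⟨ha1, ha2⟩ := hsub a ha
        obtain ⟨hb1, hb2⟩ := hsub b hb
        apply ho
        have : (o a : ℤ) = (o b : ℤ) := by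
          rcases ha1 with h | h <;> rcases hb1 with h' | h' <;>
            rcases ha2 with g | g <;> rcases hb2 with g' | g' <;> omega
        exact_mod_cast this
      have := Finset.card_compl (({k1, k2} : Finset (Fin m)).biUnion t)
      simp only [Fintype.card_fin] at this
      omega
    · -- s.card ≥ 3 : every j has a good k in s
      have huniv : s.biUnion t = Finset.univ := by
        apply Finset.eq_univ_of_forall
        intro j
        rw [Finset.mem_biUnion]
        by_contra hc
        push_neg at hc
        have hs : s ⊆ Finset.univ.filter (fun k => bad k j) := by
          intro k hk
          simp only [Finset.mem_filter, Finset.mem_univ, true_and]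
          have := hc k hk
          rw [hmem] at this
          tauto
        have := Finset.card_le_card hs
        have := hbadj j
        omega
      rw [huniv]
      simpa using Finset.card_le_univ s
  obtain ⟨f, hfinj, hft⟩ :=
    (Finset.all_card_le_biUnion_card_iff_existsInjective' t).mp hall
  refine ⟨Equiv.ofBijective f (Finite.injective_iff_bijective.mp hfinj), ?_⟩
  intro k
  have hf := hft k
  rw [hmem] at hf
  obtain ⟨a, ha⟩ := heven k
  obtain ⟨b, hb⟩ := hodd (f k)
  have : 1 < |(e k : ℤ) - (o (f k) : ℤ)| := by
    rw [lt_abs]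
    simp only [hbad, not_or] at hf
    omega
  simpa using this
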